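/- Suppose f : [0,∞) → [0,∞) and g : [0,∞) → [0,∞) are CND1 functions and f(0) = 0. Then the composition g ∘ f is also a CND1 function. Moreover, if g is strictly CND1 and f vanishes only at 0, then g ∘ f is strictly CND1. -/

import Mathlib

open scoped MatrixOrder in
lemma gram_of_AND {n : ℕ} (hn : 0 < n) (M : Matrix (Fin n) (Fin n) ℝ)
    (hsym : ∀ i j, M j i = M i j)
    (hAND : ∀ y : Fin n → ℝ, (∑ i, y i) = 0 → ∑ i, ∑ j, y i * M i j * y j ≤ 0)
    (hdiag : ∀ i, M i i = 0) :
    ∃ p : Fin n → EuclideanSpace ℝ (Fin n), ∀ i j, ‖p i - p j‖ ^ 2 = M i j := by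
  classical
  set i0 : Fin n := ⟨0, hn⟩
  set B : Matrix (Fin n) (Fin n) ℝ :=
    Matrix.of (fun i j => (M i i0 + M i0 j - M i j) / 2) with hB
  have hBapp : ∀ i j, B i j = (M i i0 + M i0 j - M i j) / 2 := fun i j => rfl
  have hBsym : ∀ i j, B j i = B i j := by
    intro i j
    simp only [hBapp, hsym i0 j, hsym i j, hsym i0 i]
    ring
  have hBpsd : B.PosSemidef := by
    refine Matrix.PosSemidef.of_dotProduct_mulVec_nonneg ?_ ?_
    · ext i j
      simp only [Matrix.conjTranspose_apply, star_trivial, hBsym]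
    · intro z
      have hstar : star z = z := by ext i; simp
      rw [hstar]
      set s : ℝ := ∑ i, z i with hs
      set y : Fin n → ℝ := fun i => z i - (if i = i0 then s else 0) with hy
      have hysum : (∑ i, y i) = 0 := by
        simp [hy, Finset.sum_sub_distrib, hs]
      have hinner : ∀ i, (∑ j, M i j * y j) = (∑ j, M i j * z j) - M i i0 * s := by
        intro i
        have : ∀ j, M i j * y j = M i j * z j - (if j = i0 then M i j * s else 0) := by
          intro j; simp only [hy]; split <;> ring
        simp [this, Finset.sum_sub_distrib]
      have hQy : (∑ i, ∑ j, y i * M i j * y j)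
          = (∑ i, z i * (∑ j, M i j * z j)) - (∑ i, z i * M i i0 * s)
            - s * (∑ j, M i0 j * z j) := by
        have step1 : ∀ i, (∑ j, y i * M i j * y j)
            = y i * ((∑ j, M i j * z j) - M i i0 * s) := by
          intro i
          rw [← hinner i, Finset.mul_sum]
          exact Finset.sum_congr rfl fun j _ => by ring
        simp only [step1]
        have step2 : ∀ i, y i * ((∑ j, M i j * z j) - M i i0 * s)
            = z i * (∑ j, M i j * z j) - z i * M i i0 * s
              - (if i = i0 then s * ((∑ j, M i j * z j) - M i i0 * s) else 0) := by
          intro i; simp only [hy]; split <;> ring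
        simp only [step2]
        rw [Finset.sum_sub_distrib, Finset.sum_sub_distrib, Finset.sum_ite_eq']
        simp only [Finset.mem_univ, if_true, hdiag i0]
        ring
      have hQ := hAND y hysum
      have hmv : ∀ i, B.mulVec z i
          = (M i i0 * s + (∑ j, M i0 j * z j) - (∑ j, M i j * z j)) / 2 := by
        intro i
        simp only [Matrix.mulVec, dotProduct, hBapp]
        rw [Finset.sum_congr rfl (fun j _ => show (M i i0 + M i0 j - M i j) / 2 * z j
            = (M i i0 * z j + M i0 j * z j - M i j * z j) / 2 from by ring),
          ← Finset.sum_div]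
        congr 1
        rw [Finset.sum_sub_distrib, Finset.sum_add_distrib, ← Finset.mul_sum, ← hs]
      have hdot : dotProduct z (B.mulVec z)
          = ((∑ i, z i * M i i0 * s) + s * (∑ j, M i0 j * z j)
              - (∑ i, z i * (∑ j, M i j * z j))) / 2 := by
        simp only [dotProduct, hmv]
        rw [Finset.sum_congr rfl (fun i _ =>
            show z i * ((M i i0 * s + (∑ j, M i0 j * z j) - (∑ j, M i j * z j)) / 2)
            = (z i * M i i0 * s + z i * (∑ j, M i0 j * z j) - z i * (∑ j, M i j * z j)) / 2
            from by ring), ← Finset.sum_div]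
        congr 1
        rw [Finset.sum_sub_distrib, Finset.sum_add_distrib, ← Finset.sum_mul,
          ← Finset.sum_mul, hs]
      rw [hdot]
      rw [hQy] at hQ
      linarith
  obtain ⟨P, hP⟩ := CStarAlgebra.nonneg_iff_eq_star_mul_self.mp hBpsd.nonneg
  have hBentry : ∀ i j, B i j = ∑ k, P k i * P k j := by
    intro i j
    rw [hP]
    simp [Matrix.mul_apply, Matrix.conjTranspose_apply, Matrix.star_eq_conjTranspose]
  set p : Fin n → EuclideanSpace ℝ (Fin n) :=
    fun i => (WithLp.equiv 2 (Fin n → ℝ)).symm (fun k => P k i) with hp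
  refine ⟨p, fun i j => ?_⟩
  have hpk : ∀ k, (p i - p j) k = P k i - P k j := fun k => rfl
  have hnorm : ‖p i - p j‖ ^ 2 = ∑ k, (P k i - P k j) ^ 2 := by
    rw [EuclideanSpace.norm_eq, Real.sq_sqrt (by positivity)]
    refine Finset.sum_congr rfl fun k _ => ?_
    rw [hpk k, Real.norm_eq_abs, sq_abs]
  rw [hnorm]
  have hexp : (∑ k, (P k i - P k j) ^ 2)
      = (∑ k, P k i * P k i) + (∑ k, P k j * P k j) - 2 * (∑ k, P k i * P k j) := by
    rw [Finset.mul_sum, ← Finset.sum_add_distrib, ← Finset.sum_sub_distrib]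
    exact Finset.sum_congr rfl fun k _ => by ring
  rw [hexp, ← hBentry i i, ← hBentry j j, ← hBentry i j]
  simp only [hBapp, hdiag, hsym i0 j, hsym i j, hsym i0 i]
  ring



/-- A symmetric real matrix `A` is *almost negative definite* if
`yᵀ A y ≤ 0` for every vector `y` whose coordinates sum to zero. -/
def IsAND {n : ℕ} (A : Matrix (Fin n) (Fin n) ℝ) : Prop :=
  A.IsSymm ∧ ∀ y : Fin n → ℝ, (∑ i, y i) = 0 →
    ∑ i, ∑ j, y i * A i j * y j ≤ 0

/-- A symmetric real matrix `A` is *strictly almost negative definite* if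
moreover `yᵀ A y < 0` for every nonzero such `y`. -/
def IsStrictAND {n : ℕ} (A : Matrix (Fin n) (Fin n) ℝ) : Prop :=
  A.IsSymm ∧ ∀ y : Fin n → ℝ, (∑ i, y i) = 0 → y ≠ 0 →
    ∑ i, ∑ j, y i * A i j * y j < 0

/-- `f` is conditionally negative definite of order 1: for all positive `n`, `d`
and points `x¹, …, xⁿ ∈ ℝ^d`, the matrix `(f(|xⁱ − xʲ|²))` is almost negative
definite. -/
def IsCND1 (f : ℝ → ℝ) : Prop :=
  ∀ (n d : ℕ), 0 < n → 0 < d → ∀ x : Fin n → EuclideanSpace ℝ (Fin d),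
    IsAND (Matrix.of fun i j => f (‖x i - x j‖ ^ 2))

/-- `f` is strictly CND1: the matrix `(f(|xⁱ − xʲ|²))` is strictly almost
negative definite whenever `n ≥ 2` and the points are distinct. -/
def IsStrictCND1 (f : ℝ → ℝ) : Prop :=
  IsCND1 f ∧
    ∀ (n d : ℕ), 2 ≤ n → 0 < d → ∀ x : Fin n → EuclideanSpace ℝ (Fin d),
      Function.Injective x →
      IsStrictAND (Matrix.of fun i j => f (‖x i - x j‖ ^ 2))

theorem stmt3 (f g : ℝ → ℝ)
    (hf_map : ∀ t : ℝ, 0 ≤ t → 0 ≤ f t) (hg_map : ∀ t : ℝ, 0 ≤ t → 0 ≤ g t)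
    (hf : IsCND1 f) (hg : IsCND1 g) (hf0 : f 0 = 0) :
    IsCND1 (g ∘ f) ∧
      (IsStrictCND1 g → (∀ t : ℝ, 0 ≤ t → f t = 0 → t = 0) →
        IsStrictCND1 (g ∘ f)) := by
  have key : ∀ (n d : ℕ), 0 < n → 0 < d → ∀ x : Fin n → EuclideanSpace ℝ (Fin d),
      ∃ p : Fin n → EuclideanSpace ℝ (Fin n),
        ∀ i j, ‖p i - p j‖ ^ 2 = f (‖x i - x j‖ ^ 2) := by
    intro n d hn hd x
    obtain ⟨hMs, hMq⟩ := hf n d hn hd x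
    exact gram_of_AND hn (Matrix.of fun i j => f (‖x i - x j‖ ^ 2))
      (fun i j => hMs.apply i j) hMq (fun i => by simp [hf0])
  have hcnd : IsCND1 (g ∘ f) := by
    intro n d hn hd x
    obtain ⟨p, hp⟩ := key n d hn hd x
    have hmat : (Matrix.of fun i j => (g ∘ f) (‖x i - x j‖ ^ 2))
        = (Matrix.of fun i j => g (‖p i - p j‖ ^ 2)) := by
      ext i j
      simp only [Matrix.of_apply, Function.comp_apply, hp i j]
    rw [hmat]
    exact hg n n hn hn p
  refine ⟨hcnd, fun hgs hfz => ⟨hcnd, ?_⟩⟩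
  intro n d hn2 hd x hxinj
  have hn : 0 < n := by omega
  obtain ⟨p, hp⟩ := key n d hn hd x
  have hpinj : Function.Injective p := by
    intro i j hij
    have h0 : f (‖x i - x j‖ ^ 2) = 0 := by
      rw [← hp i j, hij, sub_self, norm_zero]
      norm_num
    have ht : ‖x i - x j‖ ^ 2 = 0 := hfz _ (by positivity) h0
    have hx : x i = x j := by
      rw [pow_eq_zero_iff (two_ne_zero), norm_eq_zero, sub_eq_zero] at ht
      exact ht
    exact hxinj hx
  have hmat : (Matrix.of fun i j => (g ∘ f) (‖x i - x j‖ ^ 2))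
      = (Matrix.of fun i j => g (‖p i - p j‖ ^ 2)) := by
    ext i j
    simp only [Matrix.of_apply, Function.comp_apply, hp i j]
  rw [hmat]
  exact hgs.2 n n hn2 hn p hpinj
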